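/- Fix λ > 0 and ρ > 0. For γ > 0, set √ω_γ := λρ/4 + 2/γ, x̄_γ := (1/(2√ω_γ))·log((γ√ω_γ + 2)/(γ√ω_γ − 2)), and define the antisymmetric stationary state φ_γ(x) := −√(2ω_γ/λ)·sech(√ω_γ(x − x̄_γ)) for x < 0 and φ_γ(x) := √(2ω_γ/λ)·sech(√ω_γ(x + x̄_γ)) for x > 0. Let g(x) := sgn(x)·(ρ√λ/(2√2))·sech((λρ/4)x). Then, as γ → +∞, ∫_ℝ |φ_γ(x) − g(x)|² dx + ∫_{ℝ∖{0}} |φ_γ'(x) − g'(x)|² dx → 0; i.e., φ_γ converges strongly in H¹(ℝ⁻) ⊕ H¹(ℝ⁺) and the modulus of the limit is the free soliton of mass ρ. -/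

import Mathlib

open MeasureTheory Real Filter Set Topology

noncomputable section

/-- sech x = 1 / cosh x -/
def sech (x : ℝ) : ℝ := 1 / Real.cosh x


lemma sech_pos (t : ℝ) : 0 < sech t := div_pos one_pos (Real.cosh_pos t)
lemma continuous_sech : Continuous sech :=
  continuous_const.div Real.continuous_cosh fun x => (Real.cosh_pos x).ne'
lemma sech_le_two_exp (t : ℝ) : sech t ≤ 2 * Real.exp (-|t|) := by
  have h : Real.exp |t| / 2 ≤ Real.cosh t := by
    rw [Real.cosh_eq]
    rcases abs_cases t with ⟨h1, _⟩ | ⟨h1, _⟩ <;> rw [h1] <;>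
      [have := (Real.exp_pos (-t)).le; have := (Real.exp_pos t).le] <;> linarith
  have h2 : (0:ℝ) < Real.exp |t| / 2 := by positivity
  calc sech t ≤ 1 / (Real.exp |t| / 2) := one_div_le_one_div_of_le h2 h
    _ = 2 * Real.exp (-|t|) := by rw [Real.exp_neg]; field_simp
lemma abs_sinh_le_cosh (t : ℝ) : |Real.sinh t| ≤ Real.cosh t := by
  have h1 := Real.cosh_sq t
  have h2 := Real.cosh_pos t
  rw [abs_le]; constructor <;> nlinarith

lemma exp_arg_bound {c s b : ℝ} (hc : 0 < c) (hs1 : c ≤ s) (hs2 : s ≤ c + 1)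
    (hb : |b| ≤ 1) (x : ℝ) :
    Real.exp (-|s * (x + b)|) ≤ Real.exp (c + 1) * Real.exp (-(c * |x|)) := by
  rw [← Real.exp_add, Real.exp_le_exp]
  have h1 : |s * (x + b)| = s * |x + b| := by
    rw [abs_mul, abs_of_nonneg (hc.le.trans hs1)]
  have h2 : |x| ≤ |x + b| + |b| := by simpa using abs_add_le (x + b) (-b)
  have h3 : c * |x + b| ≤ s * |x + b| := mul_le_mul_of_nonneg_right hs1 (abs_nonneg _)
  have h4 : c * |b| ≤ c * 1 := mul_le_mul_of_nonneg_left hb hc.le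
  have h5 : c * |x| ≤ c * (|x + b| + |b|) := mul_le_mul_of_nonneg_left h2 hc.le
  rw [h1]
  nlinarith [abs_nonneg (x + b)]

lemma sech_arg_le {c s b : ℝ} (hc : 0 < c) (hs1 : c ≤ s) (hs2 : s ≤ c + 1)
    (hb : |b| ≤ 1) (x : ℝ) :
    sech (s * (x + b)) ≤ 2 * Real.exp (c + 1) * Real.exp (-(c * |x|)) := by
  have h1 := sech_le_two_exp (s * (x + b))
  have h2 := exp_arg_bound hc hs1 hs2 hb x
  nlinarith [Real.exp_pos (-|s * (x + b)|)]

lemma psi_abs_le {A K1 c s b : ℝ} (hc : 0 < c) (hs1 : c ≤ s) (hs2 : s ≤ c + 1)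
    (hb : |b| ≤ 1) (hA : |A| ≤ K1) (x : ℝ) :
    |A * sech (s * (x + b))| ≤ (2 * K1 * Real.exp (c + 1)) * Real.exp (-(c * |x|)) := by
  have hK1 : 0 ≤ K1 := (abs_nonneg A).trans hA
  rw [abs_mul, abs_of_pos (sech_pos _)]
  calc |A| * sech (s * (x + b))
      ≤ K1 * (2 * Real.exp (c + 1) * Real.exp (-(c * |x|))) :=
        mul_le_mul hA (sech_arg_le hc hs1 hs2 hb x) (sech_pos _).le hK1
    _ = (2 * K1 * Real.exp (c + 1)) * Real.exp (-(c * |x|)) := by ring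

lemma Dpsi_abs_le {A K1 c s b : ℝ} (hc : 0 < c) (hs1 : c ≤ s) (hs2 : s ≤ c + 1)
    (hb : |b| ≤ 1) (hA : |A| ≤ K1) (x : ℝ) :
    |(-(A * s * Real.sinh (s * (x + b)) / Real.cosh (s * (x + b)) ^ 2))| ≤
      (2 * K1 * (c + 1) * Real.exp (c + 1)) * Real.exp (-(c * |x|)) := by
  have hK1 : 0 ≤ K1 := (abs_nonneg A).trans hA
  set u := s * (x + b) with hu
  have key : |Real.sinh u / Real.cosh u ^ 2| ≤ sech u := by
    rw [abs_div, abs_of_pos (pow_pos (Real.cosh_pos u) 2), sech,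
      div_le_div_iff₀ (by positivity) (Real.cosh_pos u)]
    nlinarith [abs_sinh_le_cosh u, Real.cosh_pos u]
  have h0 : |(-(A * s * Real.sinh u / Real.cosh u ^ 2))| =
      |A| * |s| * |Real.sinh u / Real.cosh u ^ 2| := by
    rw [abs_neg, show A * s * Real.sinh u / Real.cosh u ^ 2
      = A * s * (Real.sinh u / Real.cosh u ^ 2) from by ring, abs_mul, abs_mul]
  rw [h0]
  have hsabs : |s| ≤ c + 1 := by rw [abs_of_nonneg (hc.le.trans hs1)]; exact hs2
  calc |A| * |s| * |Real.sinh u / Real.cosh u ^ 2|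
      ≤ (K1 * (c + 1)) * (2 * Real.exp (c + 1) * Real.exp (-(c * |x|))) := by
        apply mul_le_mul _ (key.trans (sech_arg_le hc hs1 hs2 hb x)) (abs_nonneg _)
          (by positivity)
        exact mul_le_mul hA hsabs (abs_nonneg s) hK1
    _ = (2 * K1 * (c + 1) * Real.exp (c + 1)) * Real.exp (-(c * |x|)) := by ring

lemma hasDerivAt_sech_aff (A a b x : ℝ) :
    HasDerivAt (fun y => A * sech (a * (y + b)))
      (-(A * a * Real.sinh (a * (x + b)) / Real.cosh (a * (x + b)) ^ 2)) x := by
  have h1 : HasDerivAt (fun y : ℝ => a * (y + b)) a x := by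
    simpa using ((hasDerivAt_id x).add_const b).const_mul a
  have h2 : HasDerivAt (fun y : ℝ => Real.cosh (a * (y + b)))
      (Real.sinh (a * (x + b)) * a) x := (Real.hasDerivAt_cosh _).comp x h1
  have h3 := (h2.inv (Real.cosh_pos _).ne').const_mul A
  have he : (fun y => A * sech (a * (y + b))) = fun y => A * (Real.cosh (a * (y + b)))⁻¹ := by
    funext y; rw [sech, one_div]
  rw [he]
  refine h3.congr_deriv ?_
  ring

lemma integrable_exp_neg_mul_abs {k : ℝ} (hk : 0 < k) :
    Integrable (fun x : ℝ => Real.exp (-(k * |x|))) := by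
  have h1 : IntegrableOn (fun x : ℝ => Real.exp (-(k * |x|))) (Ioi 0) := by
    apply (exp_neg_integrableOn_Ioi 0 hk).congr_fun _ measurableSet_Ioi
    intro x hx; simp only; rw [abs_of_pos hx, neg_mul]
  have h2 : IntegrableOn (fun x : ℝ => Real.exp (-(k * |x|))) (Iio 0) := by
    rw [← (Measure.measurePreserving_neg (volume : Measure ℝ)).integrableOn_comp_preimage
        (Homeomorph.neg ℝ).measurableEmbedding]
    simp only [Function.comp_def, abs_neg, neg_preimage, neg_Iio, neg_zero]
    exact h1
  rw [← integrableOn_univ, ← Iio_union_Ici (a := (0:ℝ)), integrableOn_union,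
    integrableOn_Ici_iff_integrableOn_Ioi]
  exact ⟨h2, h1⟩

lemma sq_diff_bound {d1 d2 M1 M2 E : ℝ} (hE : 0 ≤ E)
    (h1 : |d1| ≤ M1 * E) (h2 : |d2| ≤ M2 * E) :
    ‖(d1 - d2) ^ 2‖ ≤ (M1 + M2) ^ 2 * E ^ 2 := by
  rw [Real.norm_eq_abs, abs_of_nonneg (sq_nonneg _)]
  have h : |d1 - d2| ≤ (M1 + M2) * E := by
    rw [sub_eq_add_neg]
    refine (abs_add_le _ _).trans ?_
    rw [abs_neg]; nlinarith
  calc (d1 - d2) ^ 2 = |d1 - d2| ^ 2 := (sq_abs _).symm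
    _ ≤ ((M1 + M2) * E) ^ 2 := pow_le_pow_left₀ (abs_nonneg _) h 2
    _ = (M1 + M2) ^ 2 * E ^ 2 := by ring

lemma tendsto_psi {l : Filter ℝ} {A a b : ℝ → ℝ} {A0 a0 b0 x : ℝ}
    (hA : Tendsto A l (𝓝 A0)) (ha : Tendsto a l (𝓝 a0)) (hb : Tendsto b l (𝓝 b0)) :
    Tendsto (fun i => A i * sech (a i * (x + b i))) l (𝓝 (A0 * sech (a0 * (x + b0)))) :=
  hA.mul ((continuous_sech.tendsto _).comp (ha.mul (tendsto_const_nhds.add hb)))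

lemma tendsto_Dpsi {l : Filter ℝ} {A a b : ℝ → ℝ} {A0 a0 b0 x : ℝ}
    (hA : Tendsto A l (𝓝 A0)) (ha : Tendsto a l (𝓝 a0)) (hb : Tendsto b l (𝓝 b0)) :
    Tendsto (fun i => -(A i * a i * Real.sinh (a i * (x + b i)) /
        Real.cosh (a i * (x + b i)) ^ 2)) l
      (𝓝 (-(A0 * a0 * Real.sinh (a0 * (x + b0)) / Real.cosh (a0 * (x + b0)) ^ 2))) := by
  have harg : Tendsto (fun i => a i * (x + b i)) l (𝓝 (a0 * (x + b0))) :=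
    ha.mul (tendsto_const_nhds.add hb)
  exact (((hA.mul ha).mul ((Real.continuous_sinh.tendsto _).comp harg)).div
    (((Real.continuous_cosh.tendsto _).comp harg).pow 2)
    (pow_ne_zero _ (Real.cosh_pos _).ne')).neg

lemma sqrt_ident {lam ρ : ℝ} (hlam : 0 < lam) (hρ : 0 < ρ) :
    Real.sqrt (2 * (lam * ρ / 4) ^ 2 / lam) = ρ * Real.sqrt lam / (2 * Real.sqrt 2) := by
  have h2 : Real.sqrt 2 ^ 2 = 2 := Real.sq_sqrt (by norm_num)
  have hl : Real.sqrt lam ^ 2 = lam := Real.sq_sqrt hlam.le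
  have h2p : (0:ℝ) < Real.sqrt 2 := Real.sqrt_pos.mpr (by norm_num)
  have hlp : (0:ℝ) < Real.sqrt lam := Real.sqrt_pos.mpr hlam
  rw [show 2 * (lam * ρ / 4) ^ 2 / lam = (ρ * Real.sqrt lam / (2 * Real.sqrt 2)) ^ 2 by
    field_simp; linear_combination 8*lam*h2 - 16*hl]
  exact Real.sqrt_sq (by positivity)

lemma measurable_real_sign : Measurable Real.sign := by
  have : Real.sign = fun r : ℝ => if r < 0 then (-1 : ℝ) else if 0 < r then 1 else 0 := rfl
  rw [this]
  exact Measurable.ite measurableSet_Iio measurable_const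
    (Measurable.ite measurableSet_Ioi measurable_const measurable_const)


set_option maxHeartbeats 1000000 in
/-- No-defect limit γ → +∞ at fixed mass ρ of the antisymmetric stationary state of the
cubic NLS with a delta-prime interaction: φ_γ converges strongly in H¹(ℝ⁻) ⊕ H¹(ℝ⁺) to
sgn(x) times the free soliton of mass ρ. Here `s γ = √ω_γ = λρ/4 + 2/γ`. -/
theorem statement18 (lam ρ : ℝ) (hlam : 0 < lam) (hρ : 0 < ρ)
    (s xb : ℝ → ℝ)
    (hs : ∀ γ, s γ = lam * ρ / 4 + 2 / γ)
    (hxb : ∀ γ, xb γ = (1 / (2 * s γ)) *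
      Real.log ((γ * s γ + 2) / (γ * s γ - 2)))
    (φ : ℝ → ℝ → ℝ)
    (hφ : ∀ γ x, φ γ x = if x < 0
      then -(Real.sqrt (2 * (s γ) ^ 2 / lam) * sech (s γ * (x - xb γ)))
      else Real.sqrt (2 * (s γ) ^ 2 / lam) * sech (s γ * (x + xb γ)))
    (g : ℝ → ℝ)
    (hg : ∀ x, g x = Real.sign x * (ρ * Real.sqrt lam / (2 * Real.sqrt 2)) *
      sech ((lam * ρ / 4) * x)) :
    Tendsto (fun γ : ℝ =>
        (∫ x : ℝ, (φ γ x - g x) ^ 2)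
          + ∫ x in ({(0:ℝ)}ᶜ : Set ℝ), (deriv (φ γ) x - deriv g x) ^ 2)
      atTop (𝓝 0) := by
  set c : ℝ := lam * ρ / 4 with hcdef
  have hc : 0 < c := by positivity
  set K : ℝ := ρ * Real.sqrt lam / (2 * Real.sqrt 2) with hKdef
  have hK : 0 < K := by
    have := Real.sqrt_pos.mpr hlam
    have : (0:ℝ) < Real.sqrt 2 := Real.sqrt_pos.mpr (by norm_num)
    positivity
  set A : ℝ → ℝ := fun γ => Real.sqrt (2 * (s γ) ^ 2 / lam) with hAdef
  -- basic limits
  have hst : Tendsto s atTop (𝓝 c) := by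
    have h1 : Tendsto (fun γ : ℝ => c + 2 / γ) atTop (𝓝 (c + 0)) :=
      tendsto_const_nhds.add (tendsto_const_nhds.div_atTop tendsto_id)
    rw [add_zero] at h1
    exact h1.congr fun γ => (hs γ).symm
  have hxbt : Tendsto xb atTop (𝓝 0) := by
    have hmul : ∀ γ : ℝ, γ ≠ 0 → γ * s γ = c * γ + 2 := by
      intro γ h; rw [hs γ]; field_simp
    have hr : Tendsto (fun γ : ℝ => (γ * s γ + 2) / (γ * s γ - 2)) atTop (𝓝 1) := by
      have h1 : Tendsto (fun γ : ℝ => 1 + 4 / (c * γ)) atTop (𝓝 (1 + 0)) :=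
        tendsto_const_nhds.add
          (tendsto_const_nhds.div_atTop (tendsto_id.const_mul_atTop hc))
      rw [add_zero] at h1
      apply h1.congr'
      filter_upwards [eventually_gt_atTop 0] with γ hγ
      rw [hmul γ hγ.ne', show c * γ + 2 + 2 = c * γ + 4 from by ring,
        show c * γ + 2 - 2 = c * γ from by ring]
      have hcγ : (0:ℝ) < c * γ := by positivity
      field_simp
    have hlog : Tendsto (fun γ : ℝ => Real.log ((γ * s γ + 2) / (γ * s γ - 2)))
        atTop (𝓝 0) := by
      have := (Real.continuousAt_log one_ne_zero).tendsto.comp hr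
      rwa [Real.log_one] at this
    have hcoef : Tendsto (fun γ : ℝ => 1 / (2 * s γ)) atTop (𝓝 (1 / (2 * c))) :=
      tendsto_const_nhds.div (tendsto_const_nhds.mul hst) (by positivity)
    have h2 := hcoef.mul hlog
    rw [mul_zero] at h2
    exact h2.congr fun γ => (hxb γ).symm
  have hAt : Tendsto A atTop (𝓝 K) := by
    have hco : Continuous fun t : ℝ => Real.sqrt (2 * t ^ 2 / lam) := by
      exact Real.continuous_sqrt.comp ((continuous_const.mul (continuous_pow 2)).div_const lam)
    have h1 := (hco.tendsto c).comp hst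
    rwa [Function.comp_def, show Real.sqrt (2 * c ^ 2 / lam) = K from
      sqrt_ident hlam hρ] at h1
  -- measurability
  have hφm : ∀ γ, Measurable (φ γ) := by
    intro γ
    have he : φ γ = fun x => if x < 0
        then -(A γ * sech (s γ * (x - xb γ)))
        else A γ * sech (s γ * (x + xb γ)) := funext (hφ γ)
    rw [he]
    exact Measurable.ite measurableSet_Iio
      ((continuous_const.mul (continuous_sech.comp
        (continuous_const.mul (continuous_id.sub continuous_const)))).neg.measurable)
      ((continuous_const.mul (continuous_sech.comp
        (continuous_const.mul (continuous_id.add continuous_const)))).measurable)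
  have hgm : Measurable g := by
    have he : g = fun x => Real.sign x * K * sech (c * x) := funext hg
    rw [he]
    exact (measurable_real_sign.mul measurable_const).mul
      (continuous_sech.comp (continuous_const.mul continuous_id)).measurable
  -- a.e. x ≠ 0
  have hae : ∀ᵐ x : ℝ, x ≠ 0 := by
    rw [ae_iff]
    simp only [not_not, Set.setOf_eq_eq_singleton]
    exact measure_singleton 0
  -- derivative formulas
  have hdφneg : ∀ γ, ∀ x : ℝ, x < 0 → deriv (φ γ) x =
      -((-(A γ)) * s γ * Real.sinh (s γ * (x + -xb γ)) /
        Real.cosh (s γ * (x + -xb γ)) ^ 2) := by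
    intro γ x hx
    have hev : φ γ =ᶠ[𝓝 x] fun y => (-(A γ)) * sech (s γ * (y + -xb γ)) := by
      filter_upwards [Iio_mem_nhds hx] with y hy
      rw [hφ γ y, if_pos (show y < 0 from hy), sub_eq_add_neg, neg_mul]
    rw [hev.deriv_eq]
    exact (hasDerivAt_sech_aff _ _ _ x).deriv
  have hdφpos : ∀ γ, ∀ x : ℝ, 0 < x → deriv (φ γ) x =
      -(A γ * s γ * Real.sinh (s γ * (x + xb γ)) /
        Real.cosh (s γ * (x + xb γ)) ^ 2) := by
    intro γ x hx
    have hev : φ γ =ᶠ[𝓝 x] fun y => A γ * sech (s γ * (y + xb γ)) := by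
      filter_upwards [Ioi_mem_nhds hx] with y hy
      rw [hφ γ y, if_neg (not_lt.mpr (le_of_lt (show (0:ℝ) < y from hy)))]
    rw [hev.deriv_eq]
    exact (hasDerivAt_sech_aff _ _ _ x).deriv
  have hdgneg : ∀ x : ℝ, x < 0 → deriv g x =
      -((-K) * c * Real.sinh (c * (x + 0)) / Real.cosh (c * (x + 0)) ^ 2) := by
    intro x hx
    have hev : g =ᶠ[𝓝 x] fun y => (-K) * sech (c * (y + 0)) := by
      filter_upwards [Iio_mem_nhds hx] with y hy
      rw [hg y, Real.sign_of_neg hy, add_zero]; ring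
    rw [hev.deriv_eq]
    exact (hasDerivAt_sech_aff _ _ _ x).deriv
  have hdgpos : ∀ x : ℝ, 0 < x → deriv g x =
      -(K * c * Real.sinh (c * (x + 0)) / Real.cosh (c * (x + 0)) ^ 2) := by
    intro x hx
    have hev : g =ᶠ[𝓝 x] fun y => K * sech (c * (y + 0)) := by
      filter_upwards [Ioi_mem_nhds hx] with y hy
      rw [hg y, Real.sign_of_pos hy, add_zero]; ring
    rw [hev.deriv_eq]
    exact (hasDerivAt_sech_aff _ _ _ x).deriv
  -- eventual bounds
  have ev1 : ∀ᶠ γ : ℝ in atTop, s γ ≤ c + 1 := hst.eventually (eventually_le_nhds (lt_add_one c))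
  have ev2 : ∀ᶠ γ : ℝ in atTop, c ≤ s γ := by
    filter_upwards [eventually_gt_atTop 0] with γ hγ
    rw [hs γ]
    have : (0:ℝ) < 2 / γ := by positivity
    linarith
  have ev3 : ∀ᶠ γ : ℝ in atTop, |xb γ| ≤ 1 := by
    have h1 : Tendsto (fun γ => |xb γ|) atTop (𝓝 0) := by
      simpa using hxbt.abs
    exact h1.eventually (eventually_le_nhds one_pos)
  have ev4 : ∀ᶠ γ : ℝ in atTop, |A γ| ≤ K + 1 := by
    have h1 : Tendsto (fun γ => |A γ|) atTop (𝓝 K) := by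
      simpa [abs_of_pos hK] using hAt.abs
    exact h1.eventually (eventually_le_nhds (lt_add_one K))
  -- constants
  set M1 : ℝ := 2 * (K + 1) * Real.exp (c + 1) with hM1
  set M2 : ℝ := 2 * K * Real.exp (c + 1) with hM2
  set N1 : ℝ := 2 * (K + 1) * (c + 1) * Real.exp (c + 1) with hN1
  set N2 : ℝ := 2 * K * (c + 1) * Real.exp (c + 1) with hN2
  have hKabs : |K| ≤ K := le_of_eq (abs_of_pos hK)
  have hnKabs : |(-K)| ≤ K := by rw [abs_neg]; exact hKabs
  have hb0 : |(0:ℝ)| ≤ 1 := by norm_num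
  have hcc1 : c ≤ c := le_refl c
  have hcc2 : c ≤ c + 1 := by linarith
  -- integrable bounds
  have hEint : Integrable (fun x : ℝ => Real.exp (-(c * |x|)) ^ 2) := by
    have h1 : (fun x : ℝ => Real.exp (-(c * |x|)) ^ 2)
        = fun x : ℝ => Real.exp (-(2 * c * |x|)) := by
      funext x
      rw [sq, ← Real.exp_add, show -(c * |x|) + -(c * |x|) = -(2 * c * |x|) from by ring]
    rw [h1]
    exact integrable_exp_neg_mul_abs (by positivity)
  -- FIRST integral
  have key1 : Tendsto (fun γ : ℝ => ∫ x : ℝ, (φ γ x - g x) ^ 2) atTop (𝓝 0) := by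
    have h := MeasureTheory.tendsto_integral_filter_of_dominated_convergence
      (μ := (volume : Measure ℝ)) (l := atTop)
      (F := fun γ x => (φ γ x - g x) ^ 2) (f := fun _ => (0:ℝ))
      (bound := fun x => (M1 + M2) ^ 2 * Real.exp (-(c * |x|)) ^ 2)
      ?_ ?_ ?_ ?_
    · simpa using h
    · filter_upwards with γ
      exact (((hφm γ).sub hgm).pow_const 2).aestronglyMeasurable
    · filter_upwards [ev1, ev2, ev3, ev4] with γ h1 h2 h3 h4
      filter_upwards with x
      have hgb : |g x| ≤ M2 * Real.exp (-(c * |x|)) := by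
        rcases lt_trichotomy x 0 with hx | hx | hx
        · rw [hg x, show Real.sign x * K * sech (c * x)
            = (-K) * sech (c * (x + 0)) from by rw [Real.sign_of_neg hx, add_zero]; ring]
          exact psi_abs_le hc hcc1 hcc2 hb0 hnKabs x
        · subst hx
          rw [hg 0]
          simp only [Real.sign_zero, zero_mul, abs_zero]
          positivity
        · rw [hg x, show Real.sign x * K * sech (c * x)
            = K * sech (c * (x + 0)) from by rw [Real.sign_of_pos hx, add_zero]; ring]
          exact psi_abs_le hc hcc1 hcc2 hb0 hKabs x
      have hφb : |φ γ x| ≤ M1 * Real.exp (-(c * |x|)) := by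
        rw [hφ γ x]
        by_cases hx : x < 0
        · rw [if_pos hx, show -(A γ * sech (s γ * (x - xb γ)))
            = (-(A γ)) * sech (s γ * (x + -xb γ)) from by rw [sub_eq_add_neg]; ring]
          exact psi_abs_le hc h2 h1 (by rwa [abs_neg]) (by rwa [abs_neg]) x
        · rw [if_neg hx]
          exact psi_abs_le hc h2 h1 h3 h4 x
      exact sq_diff_bound (Real.exp_pos _).le hφb hgb
    · exact hEint.const_mul _
    · filter_upwards [hae] with x hx
      rcases hx.lt_or_gt with h | h
      · have h1 : Tendsto (fun γ => φ γ x) atTop (𝓝 (g x)) := by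
          have h2 := tendsto_psi (x := x) hAt.neg hst hxbt.neg
          have h3 : ∀ γ : ℝ, (-(A γ)) * sech (s γ * (x + -xb γ)) = φ γ x := by
            intro γ
            rw [hφ γ x, if_pos h, sub_eq_add_neg]; ring
          have h4 : (-K) * sech (c * (x + -0)) = g x := by
            rw [hg x, Real.sign_of_neg h, show x + -0 = x from by ring]; ring
          rw [← h4]
          exact h2.congr h3
        have := (h1.sub (tendsto_const_nhds (x := g x))).pow 2
        simpa using this
      · have h1 : Tendsto (fun γ => φ γ x) atTop (𝓝 (g x)) := by
          have h2 := tendsto_psi (x := x) hAt hst hxbt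
          have h3 : ∀ γ : ℝ, A γ * sech (s γ * (x + xb γ)) = φ γ x := by
            intro γ
            rw [hφ γ x, if_neg (not_lt.mpr h.le)]
          have h4 : K * sech (c * (x + 0)) = g x := by
            rw [hg x, Real.sign_of_pos h, add_zero]; ring
          rw [← h4]
          exact h2.congr h3
        have := (h1.sub (tendsto_const_nhds (x := g x))).pow 2
        simpa using this
  -- SECOND integral
  have hres : (volume : Measure ℝ).restrict ({(0:ℝ)}ᶜ) = volume := by
    rw [Measure.restrict_congr_set (t := univ) (by
      rw [ae_eq_univ, compl_compl]; exact measure_singleton 0), Measure.restrict_univ]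
  have key2 : Tendsto (fun γ : ℝ =>
      ∫ x in ({(0:ℝ)}ᶜ : Set ℝ), (deriv (φ γ) x - deriv g x) ^ 2) atTop (𝓝 0) := by
    have heq : ∀ γ : ℝ, (∫ x in ({(0:ℝ)}ᶜ : Set ℝ), (deriv (φ γ) x - deriv g x) ^ 2)
        = ∫ x : ℝ, (deriv (φ γ) x - deriv g x) ^ 2 := by
      intro γ; rw [hres]
    simp only [heq]
    have h := MeasureTheory.tendsto_integral_filter_of_dominated_convergence
      (μ := (volume : Measure ℝ)) (l := atTop)
      (F := fun γ x => (deriv (φ γ) x - deriv g x) ^ 2) (f := fun _ => (0:ℝ))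
      (bound := fun x => (N1 + N2) ^ 2 * Real.exp (-(c * |x|)) ^ 2)
      ?_ ?_ ?_ ?_
    · simpa using h
    · filter_upwards with γ
      exact (((measurable_deriv (φ γ)).sub (measurable_deriv g)).pow_const 2).aestronglyMeasurable
    · filter_upwards [ev1, ev2, ev3, ev4] with γ h1 h2 h3 h4
      filter_upwards [hae] with x hx
      rcases hx.lt_or_gt with hxn | hxp
      · rw [hdφneg γ x hxn, hdgneg x hxn]
        exact sq_diff_bound (Real.exp_pos _).le
          (Dpsi_abs_le hc h2 h1 (by rwa [abs_neg]) (by rwa [abs_neg]) x)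
          (Dpsi_abs_le hc hcc1 hcc2 hb0 hnKabs x)
      · rw [hdφpos γ x hxp, hdgpos x hxp]
        exact sq_diff_bound (Real.exp_pos _).le
          (Dpsi_abs_le hc h2 h1 h3 h4 x)
          (Dpsi_abs_le hc hcc1 hcc2 hb0 hKabs x)
    · exact hEint.const_mul _
    · filter_upwards [hae] with x hx
      rcases hx.lt_or_gt with hxn | hxp
      · have h1 : Tendsto (fun γ => deriv (φ γ) x) atTop (𝓝 (deriv g x)) := by
          have h2 := tendsto_Dpsi (x := x) hAt.neg hst hxbt.neg
          rw [show x + -0 = x + 0 from by ring] at h2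
          rw [← hdgneg x hxn] at h2
          exact h2.congr fun γ => (hdφneg γ x hxn).symm
        have := (h1.sub (tendsto_const_nhds (x := deriv g x))).pow 2
        simpa using this
      · have h1 : Tendsto (fun γ => deriv (φ γ) x) atTop (𝓝 (deriv g x)) := by
          have h2 := tendsto_Dpsi (x := x) hAt hst hxbt
          rw [show x + 0 = x + 0 from rfl] at h2
          rw [← hdgpos x hxp] at h2
          exact h2.congr fun γ => (hdφpos γ x hxp).symm
        have := (h1.sub (tendsto_const_nhds (x := deriv g x))).pow 2
        simpa using this
  have := key1.add key2
  simpa using this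

end
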